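/- arXiv:0811.1553 — 2 statements merged into one kernel-verified Lean document; each statement's English description precedes it below -/
import Mathlib

section
/- Fix an integer L ≥ 2 and a real number x with 0 ≤ x < L. Let (B_m) and (R_m) be sequences of positive integers with B_m → ∞ and (R_m · L)/B_m → x as m → ∞. Then (B_m/L) · C(B_m − R_m − 1, L − 2)/C(B_m − 1, L − 1) → (1 − 1/L)·(1 − x/L)^{L−2} as m → ∞. -/
open Filter Topology Finset

lemma cast_choose_prod (n k : ℕ) (h : k ≤ n) :
    (n.choose k : ℝ) = (∏ i ∈ Finset.range k, ((n : ℝ) - i)) / (k.factorial : ℝ) := by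
  rw [eq_div_iff (by exact_mod_cast k.factorial_ne_zero)]
  have h1 : (n.descFactorial k : ℝ) = ∏ i ∈ Finset.range k, ((n : ℝ) - i) := by
    rw [Nat.descFactorial_eq_prod_range, Nat.cast_prod]
    refine Finset.prod_congr rfl fun i hi => ?_
    have : i ≤ n := le_trans (le_of_lt (Finset.mem_range.mp hi)) h
    push_cast [Nat.cast_sub this]
    ring
  rw [← h1, ← Nat.cast_mul, mul_comm, ← Nat.descFactorial_eq_factorial_mul_choose]

/-- Fixed-`L` limit of the negative hypergeometric law: if `B_m → ∞` and
`R_m · L / B_m → x` with `0 ≤ x < L`, then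
`(B_m/L) · C(B_m - R_m - 1, L-2) / C(B_m - 1, L-1) → (1 - 1/L)·(1 - x/L)^(L-2)`. -/
theorem neg_hypergeom_density_limit_fixed_L (L : ℕ) (hL : 2 ≤ L) (x : ℝ)
    (hx0 : 0 ≤ x) (hxL : x < L) (B R : ℕ → ℕ)
    (hBpos : ∀ m, 0 < B m) (hRpos : ∀ m, 0 < R m)
    (hBtop : Tendsto B atTop atTop)
    (hRL : Tendsto (fun m => ((R m : ℝ) * L) / (B m : ℝ)) atTop (nhds x)) :
    Tendsto (fun m => ((B m : ℝ) / L) *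
        (((B m - R m - 1).choose (L - 2) : ℝ) / ((B m - 1).choose (L - 1) : ℝ)))
      atTop (nhds ((1 - 1 / (L : ℝ)) * (1 - x / L) ^ (L - 2))) := by
  set k := L - 2 with hk
  have hLk : L = k + 2 := by omega
  have hL1 : L - 1 = k + 1 := by omega
  have hLpos : (0:ℝ) < L := by exact_mod_cast (by omega : 0 < L)
  have haB : Tendsto (fun m => (B m : ℝ)) atTop atTop :=
    tendsto_natCast_atTop_atTop.comp hBtop
  -- eventual bound : R m + L + 1 ≤ B m
  have hLx : (0:ℝ) < (L:ℝ) - x := by linarith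
  have hEv : ∀ᶠ m in atTop, R m + L + 1 ≤ B m := by
    have h1 : ∀ᶠ m in atTop, ((R m : ℝ) * L) / (B m : ℝ) < (x + L) / 2 :=
      hRL.eventually_lt_const (by linarith)
    have h2 : ∀ᶠ m in atTop,
        (2 * (L:ℝ) * ((L:ℝ) + 1)) / ((L:ℝ) - x) < (B m : ℝ) :=
      haB.eventually_gt_atTop _
    filter_upwards [h1, h2] with m hm1 hm2
    have hapos : (0:ℝ) < (B m : ℝ) := by
      refine lt_trans ?_ hm2
      positivity
    have hb1 : (R m : ℝ) * L < (B m : ℝ) * ((x + L) / 2) := by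
      rw [div_lt_iff₀ hapos] at hm1; linarith [hm1]
    have hb2 : 2 * (L:ℝ) * ((L:ℝ) + 1) < (B m : ℝ) * ((L:ℝ) - x) := by
      rw [div_lt_iff₀ hLx] at hm2; linarith [hm2]
    have hfin : (R m : ℝ) + L + 1 < (B m : ℝ) := by nlinarith [hLpos]
    have : (R m + L + 1 : ℕ) < B m := by exact_mod_cast (by push_cast; linarith : ((R m + L + 1 : ℕ) : ℝ) < (B m : ℝ))
    omega
  -- the simplified form
  have key : ∀ᶠ m in atTop,
      ((B m : ℝ) / L) *
        (((B m - R m - 1).choose (L - 2) : ℝ) / ((B m - 1).choose (L - 1) : ℝ)) =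
      ((k + 1 : ℝ) / L) * ((B m : ℝ) / ((B m : ℝ) - 1)) *
        ∏ i ∈ Finset.range k,
          ((((B m : ℝ) - (R m : ℝ) - 1 - i) / (B m : ℝ)) /
            (((B m : ℝ) - 2 - i) / (B m : ℝ))) := by
    filter_upwards [hEv] with m hm
    set a := (B m : ℝ)
    set r := (R m : ℝ)
    have haR : (R m : ℝ) + L + 1 ≤ a := by
      have := (Nat.cast_le (α := ℝ)).mpr hm
      push_cast at this
      simpa [a] using this
    have ha2 : (L : ℝ) + 2 ≤ a := by
      have h1 : (1:ℝ) ≤ r := Nat.one_le_cast.mpr (hRpos m)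
      linarith
    have hapos : (0:ℝ) < a := by
      have : (0:ℝ) < (L:ℝ) + 2 := by positivity
      linarith
    have hane : a ≠ 0 := ne_of_gt hapos
    have ha1 : a - 1 ≠ 0 := by
      have : (2:ℝ) ≤ (L:ℝ) := by exact_mod_cast hL
      intro h; nlinarith
    have hc1 : ((B m - R m - 1 : ℕ) : ℝ) = a - r - 1 := by
      have h1 : R m + 1 ≤ B m := by omega
      push_cast [Nat.sub_sub, Nat.cast_sub h1]
      ring
    have hc2 : ((B m - 1 : ℕ) : ℝ) = a - 1 := by
      have h1 : 1 ≤ B m := hBpos m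
      push_cast [Nat.cast_sub h1]
      ring
    rw [cast_choose_prod _ _ (show L - 2 ≤ B m - R m - 1 by omega),
        cast_choose_prod _ _ (show L - 1 ≤ B m - 1 by omega), hc1, hc2, hL1, ← hk]
    rw [Finset.prod_range_succ']
    have hprod1 : (∏ i ∈ Finset.range k, ((a - 1) - ((i : ℕ) + 1 : ℕ))) =
        ∏ i ∈ Finset.range k, (a - 2 - i) := by
      refine Finset.prod_congr rfl fun i _ => ?_
      push_cast; ring
    rw [hprod1]
    have hQpos : ∀ i ∈ Finset.range k, (0:ℝ) < a - 2 - i := by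
      intro i hi
      have : (i:ℝ) ≤ (k:ℝ) - 1 := by
        have := Finset.mem_range.mp hi
        have : (i:ℝ) + 1 ≤ (k:ℝ) := by exact_mod_cast this
        linarith
      have : (k:ℝ) + 2 ≤ (L:ℝ) := by exact_mod_cast (by omega : k + 2 ≤ L)
      linarith
    rw [show (∏ i ∈ Finset.range k,
          (((a - r - 1 - i) / a) / ((a - 2 - i) / a))) =
        (∏ i ∈ Finset.range k, (a - r - 1 - i)) /
          (∏ i ∈ Finset.range k, (a - 2 - i)) from ?_]
    · have hQ : (∏ i ∈ Finset.range k, (a - 2 - i)) ≠ 0 :=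
        ne_of_gt (Finset.prod_pos hQpos)
      have hfac : ((k+1).factorial : ℝ) = (k+1) * (k.factorial : ℝ) := by
        push_cast [Nat.factorial_succ]; ring
      have hfk : (k.factorial : ℝ) ≠ 0 := by exact_mod_cast k.factorial_ne_zero
      rw [hfac]
      field_simp
      have ha1' : -1 + a ≠ 0 := by rwa [neg_add_eq_sub]
      linear_combination (∏ x ∈ range k, (a - r - 1 - ↑x)) * mul_inv_cancel₀ ha1'
    · rw [← Finset.prod_div_distrib]
      refine Finset.prod_congr rfl fun i hi => ?_
      have hd := ne_of_gt (hQpos i hi)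
      field_simp
  refine Tendsto.congr' (key.mono fun m hm => hm.symm) ?_
  -- now the limit of the simplified form
  have hinv : Tendsto (fun m => ((B m : ℝ))⁻¹) atTop (nhds 0) :=
    tendsto_inv_atTop_zero.comp haB
  have hratio : Tendsto (fun m => (B m : ℝ) / ((B m : ℝ) - 1)) atTop (nhds 1) := by
    have h1 : Tendsto (fun m => (1 : ℝ) - ((B m : ℝ))⁻¹) atTop (nhds 1) := by
      simpa using (tendsto_const_nhds.sub hinv)
    have h2 : Tendsto (fun m => (1 - ((B m : ℝ))⁻¹)⁻¹) atTop (nhds 1) := by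
      simpa using h1.inv₀ one_ne_zero
    refine h2.congr' ?_
    filter_upwards [haB.eventually_gt_atTop 1] with m hm
    have hane : (B m : ℝ) ≠ 0 := by positivity
    have h3 : 1 - ((B m : ℝ))⁻¹ = ((B m : ℝ) - 1) / (B m : ℝ) := by
      field_simp
    rw [h3, inv_div]
  have hroverB : Tendsto (fun m => (R m : ℝ) / (B m : ℝ)) atTop (nhds (x / L)) := by
    have := hRL.div_const (L : ℝ)
    refine this.congr fun m => ?_
    rw [div_right_comm, mul_div_cancel_right₀ _ (ne_of_gt hLpos)]
  have hnum : ∀ i : ℕ, Tendsto (fun m => ((B m : ℝ) - (R m : ℝ) - 1 - i) / (B m : ℝ))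
      atTop (nhds (1 - x / L)) := by
    intro i
    have h1 : Tendsto (fun m => 1 - (R m : ℝ) / (B m : ℝ) - (1 + i) * ((B m : ℝ))⁻¹)
        atTop (nhds (1 - x / L - (1 + i) * 0)) :=
      (tendsto_const_nhds.sub hroverB).sub (hinv.const_mul _)
    have h2 : (1 : ℝ) - x / L - (1 + i) * 0 = 1 - x / L := by ring
    rw [h2] at h1
    refine h1.congr fun m => ?_
    have hane : (B m : ℝ) ≠ 0 := ne_of_gt (by exact_mod_cast hBpos m)
    field_simp
    ring
  have hden : ∀ i : ℕ, Tendsto (fun m => ((B m : ℝ) - 2 - i) / (B m : ℝ))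
      atTop (nhds 1) := by
    intro i
    have h1 : Tendsto (fun m => 1 - (2 + i) * ((B m : ℝ))⁻¹)
        atTop (nhds (1 - (2 + i) * 0)) := tendsto_const_nhds.sub (hinv.const_mul _)
    have h2 : (1 : ℝ) - (2 + i) * 0 = 1 := by ring
    rw [h2] at h1
    refine h1.congr fun m => ?_
    have hane : (B m : ℝ) ≠ 0 := ne_of_gt (by exact_mod_cast hBpos m)
    field_simp
    ring
  have hprod : Tendsto (fun m => ∏ i ∈ Finset.range k,
      ((((B m : ℝ) - (R m : ℝ) - 1 - i) / (B m : ℝ)) /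
        (((B m : ℝ) - 2 - i) / (B m : ℝ)))) atTop (nhds ((1 - x/L) ^ k)) := by
    have h1 : Tendsto (fun m => ∏ i ∈ Finset.range k,
        ((((B m : ℝ) - (R m : ℝ) - 1 - i) / (B m : ℝ)) /
          (((B m : ℝ) - 2 - i) / (B m : ℝ)))) atTop
        (nhds (∏ _i ∈ Finset.range k, (1 - x/L))) := by
      refine tendsto_finset_prod _ fun i _ => ?_
      have := (hnum i).div (hden i) one_ne_zero
      rw [div_one] at this; exact this
    simpa using h1
  have hmain : Tendsto (fun m => ((k + 1 : ℝ) / L) * ((B m : ℝ) / ((B m : ℝ) - 1)) *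
      ∏ i ∈ Finset.range k,
        ((((B m : ℝ) - (R m : ℝ) - 1 - i) / (B m : ℝ)) /
          (((B m : ℝ) - 2 - i) / (B m : ℝ)))) atTop
      (nhds (((k + 1 : ℝ) / L) * 1 * (1 - x/L) ^ k)) :=
    ((tendsto_const_nhds.mul hratio)).mul hprod
  have heq : ((k + 1 : ℝ) / L) * 1 * (1 - x/L) ^ k =
      (1 - 1 / (L : ℝ)) * (1 - x / L) ^ (L - 2) := by
    rw [← hk]
    have : (k : ℝ) + 1 = (L : ℝ) - 1 := by
      have h2 : ((L : ℕ) : ℝ) = (k : ℝ) + 2 := by exact_mod_cast hLk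
      linarith
    rw [this]
    field_simp
  rw [← heq]
  exact hmain
end

section
/- Let (B_m), (L_m), (R_m) be sequences of positive integers with L_m → ∞, L_m/B_m → 0, and (R_m · L_m)/B_m → x for some real x ≥ 0, as m → ∞. Then (B_m/L_m) · C(B_m − R_m − 1, L_m − 2)/C(B_m − 1, L_m − 1) → e^{−x} as m → ∞. -/
open Filter Topology Finset


lemma cast_choose_mul_factorial (n k : ℕ) (h : k ≤ n) :
    (n.choose k : ℝ) * (k.factorial : ℝ) = ∏ i ∈ Finset.range k, ((n : ℝ) - i) := by
  have h1 : (n.descFactorial k : ℝ) = (n.choose k : ℝ) * (k.factorial : ℝ) := by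
    rw [Nat.descFactorial_eq_factorial_mul_choose]; push_cast; ring
  rw [← h1, Nat.descFactorial_eq_prod_range, Nat.cast_prod]
  refine Finset.prod_congr rfl fun i hi => ?_
  have : i ≤ n := le_trans (le_of_lt (Finset.mem_range.1 hi)) h
  push_cast [Nat.cast_sub this]; ring

lemma ratio_upper (k n N : ℕ) (hk : k ≤ n) (hnN : n ≤ N) :
    (n.choose k : ℝ) * (N : ℝ) ^ k ≤ (N.choose k : ℝ) * (n : ℝ) ^ k := by
  have hfac : (0 : ℝ) < (k.factorial : ℝ) := by positivity
  rw [← mul_le_mul_iff_of_pos_right hfac]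
  have e1 := cast_choose_mul_factorial n k hk
  have e2 := cast_choose_mul_factorial N k (hk.trans hnN)
  calc (n.choose k : ℝ) * (N:ℝ)^k * (k.factorial : ℝ)
      = ((n.choose k : ℝ) * k.factorial) * (N:ℝ)^k := by ring
    _ = (∏ i ∈ range k, ((n:ℝ) - i)) * ∏ _i ∈ range k, (N:ℝ) := by
        rw [e1, Finset.prod_const, Finset.card_range]
    _ = ∏ i ∈ range k, ((n:ℝ) - i) * (N:ℝ) := by rw [← Finset.prod_mul_distrib]
    _ ≤ ∏ i ∈ range k, ((N:ℝ) - i) * (n:ℝ) := by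
        refine Finset.prod_le_prod (fun i hi => ?_) (fun i hi => ?_)
        · have hin : (i:ℝ) ≤ (n:ℝ) := by
            exact_mod_cast le_trans (le_of_lt (Finset.mem_range.1 hi)) hk
          have : (0:ℝ) ≤ (N:ℝ) := by positivity
          nlinarith
        · have hin : (i:ℝ) ≤ (n:ℝ) := by
            exact_mod_cast le_trans (le_of_lt (Finset.mem_range.1 hi)) hk
          have hnN' : (n:ℝ) ≤ (N:ℝ) := by exact_mod_cast hnN
          have hi0 : (0:ℝ) ≤ (i:ℝ) := by positivity
          nlinarith
    _ = (∏ i ∈ range k, ((N:ℝ) - i)) * ∏ _i ∈ range k, (n:ℝ) := by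
        rw [← Finset.prod_mul_distrib]
    _ = (N.choose k : ℝ) * (n:ℝ)^k * (k.factorial : ℝ) := by
        rw [← e2, Finset.prod_const, Finset.card_range]; ring

lemma ratio_lower (k n N : ℕ) (hk : k ≤ n) (hnN : n ≤ N) :
    (N.choose k : ℝ) * ((n : ℝ) - k + 1) ^ k ≤ (n.choose k : ℝ) * ((N : ℝ) - k + 1) ^ k := by
  have hfac : (0 : ℝ) < (k.factorial : ℝ) := by positivity
  rw [← mul_le_mul_iff_of_pos_right hfac]
  have e1 := cast_choose_mul_factorial n k hk
  have e2 := cast_choose_mul_factorial N k (hk.trans hnN)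
  have hkn : (k:ℝ) ≤ (n:ℝ) := by exact_mod_cast hk
  have hnN' : (n:ℝ) ≤ (N:ℝ) := by exact_mod_cast hnN
  calc (N.choose k : ℝ) * ((n:ℝ) - k + 1)^k * (k.factorial : ℝ)
      = ((N.choose k : ℝ) * k.factorial) * ∏ _i ∈ range k, ((n:ℝ) - k + 1) := by
        rw [Finset.prod_const, Finset.card_range]; ring
    _ = (∏ i ∈ range k, ((N:ℝ) - i)) * ∏ _i ∈ range k, ((n:ℝ) - k + 1) := by rw [e2]
    _ = ∏ i ∈ range k, ((N:ℝ) - i) * ((n:ℝ) - k + 1) := by rw [← Finset.prod_mul_distrib]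
    _ ≤ ∏ i ∈ range k, ((n:ℝ) - i) * ((N:ℝ) - k + 1) := by
        refine Finset.prod_le_prod (fun i hi => ?_) (fun i hi => ?_)
        · have hik : (i:ℝ) ≤ (k:ℝ) := by
            exact_mod_cast le_of_lt (Finset.mem_range.1 hi)
          nlinarith
        · have hik : (i:ℝ) + 1 ≤ (k:ℝ) := by
            exact_mod_cast Finset.mem_range.1 hi
          nlinarith
    _ = (∏ i ∈ range k, ((n:ℝ) - i)) * ∏ _i ∈ range k, ((N:ℝ) - k + 1) := by
        rw [← Finset.prod_mul_distrib]
    _ = ((n.choose k : ℝ) * k.factorial) * ∏ _i ∈ range k, ((N:ℝ) - k + 1) := by rw [e1]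
    _ = (n.choose k : ℝ) * ((N:ℝ) - k + 1)^k * (k.factorial : ℝ) := by
        rw [Finset.prod_const, Finset.card_range]; ring


lemma tendsto_one_sub_pow_exp (x : ℝ) (a : ℕ → ℝ) (n : ℕ → ℕ)
    (ha : ∀ᶠ m in atTop, 0 ≤ a m ∧ a m < 1)
    (haz : Tendsto a atTop (nhds 0))
    (hna : Tendsto (fun m => (n m : ℝ) * a m) atTop (nhds x)) :
    Tendsto (fun m => (1 - a m) ^ (n m)) atTop (nhds (Real.exp (-x))) := by
  -- log bounds
  have hlog : Tendsto (fun m => (n m : ℝ) * Real.log (1 - a m)) atTop (nhds (-x)) := by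
    have hlo : Tendsto (fun m => (-((n m : ℝ) * a m)) * (1 - a m)⁻¹) atTop (nhds (-x)) := by
      have h1 : Tendsto (fun m => (1 - a m)⁻¹) atTop (nhds 1) := by
        have : Tendsto (fun m => 1 - a m) atTop (nhds (1 - 0)) :=
          tendsto_const_nhds.sub haz
        simpa using this.inv₀ (by norm_num)
      simpa using (hna.neg.mul h1)
    have hhi : Tendsto (fun m => -((n m : ℝ) * a m)) atTop (nhds (-x)) := hna.neg
    refine tendsto_of_tendsto_of_tendsto_of_le_of_le' hlo hhi ?_ ?_
    · filter_upwards [ha] with m ⟨h0, h1⟩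
      have hpos : 0 < 1 - a m := by linarith
      have hlb : 1 - (1 - a m)⁻¹ ≤ Real.log (1 - a m) := by
        have := Real.log_le_sub_one_of_pos (inv_pos.2 hpos)
        rw [Real.log_inv] at this
        linarith
      have hq : -(a m * (1 - a m)⁻¹) ≤ Real.log (1 - a m) := by
        have : 1 - (1 - a m)⁻¹ = -(a m * (1 - a m)⁻¹) := by field_simp; ring
        linarith [hlb, this.le, this.ge]
      have hn0 : (0:ℝ) ≤ (n m : ℝ) := by positivity
      calc -((n m : ℝ) * a m) * (1 - a m)⁻¹ = (n m : ℝ) * (-(a m * (1 - a m)⁻¹)) := by ring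
        _ ≤ (n m : ℝ) * Real.log (1 - a m) := by
            exact mul_le_mul_of_nonneg_left hq hn0
    · filter_upwards [ha] with m ⟨h0, h1⟩
      have hpos : 0 < 1 - a m := by linarith
      have hub : Real.log (1 - a m) ≤ -a m := by
        have := Real.log_le_sub_one_of_pos hpos; linarith
      have hn0 : (0:ℝ) ≤ (n m : ℝ) := by positivity
      calc (n m : ℝ) * Real.log (1 - a m) ≤ (n m : ℝ) * (-a m) :=
            mul_le_mul_of_nonneg_left hub hn0
        _ = -((n m : ℝ) * a m) := by ring
  have := (Real.continuous_exp.tendsto (-x)).comp hlog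
  refine this.congr' ?_
  filter_upwards [ha] with m ⟨h0, h1⟩
  have hpos : 0 < 1 - a m := by linarith
  simp only [Function.comp]
  rw [Real.exp_nat_mul, Real.exp_log hpos]


lemma tendsto_div_shift (B : ℕ → ℕ) (hBpos : ∀ m, 0 < B m) (d : ℕ → ℝ)
    (hd : Tendsto (fun m => d m / (B m : ℝ)) atTop (nhds 0)) :
    Tendsto (fun m => (B m : ℝ) / ((B m : ℝ) - d m)) atTop (nhds 1) := by
  have h1 : Tendsto (fun m => ((B m : ℝ) - d m) / (B m : ℝ)) atTop (nhds 1) := by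
    have h2 : Tendsto (fun m => 1 - d m / (B m : ℝ)) atTop (nhds (1 - 0)) :=
      tendsto_const_nhds.sub hd
    rw [sub_zero] at h2
    refine h2.congr fun m => ?_
    have hB0 : (B m : ℝ) ≠ 0 := by exact_mod_cast (hBpos m).ne'
    rw [sub_div, div_self hB0]
  have h3 := h1.inv₀ one_ne_zero
  rw [inv_one] at h3
  refine h3.congr fun m => ?_
  rw [inv_div]

set_option maxHeartbeats 1600000 in
/-- Case `κ = 0`, `L → ∞` of the limiting distribution of the scaled number of mutant
blocks: if `L_m → ∞`, `L_m / B_m → 0` and `R_m · L_m / B_m → x` with `x ≥ 0`, then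
`(B_m/L_m) · C(B_m - R_m - 1, L_m - 2) / C(B_m - 1, L_m - 1) → e^(-x)`. -/
theorem neg_hypergeom_density_limit_exponential (x : ℝ) (hx : 0 ≤ x) (B L R : ℕ → ℕ)
    (hBpos : ∀ m, 0 < B m) (hLpos : ∀ m, 0 < L m) (hRpos : ∀ m, 0 < R m)
    (hLtop : Tendsto L atTop atTop)
    (hLB : Tendsto (fun m => (L m : ℝ) / (B m : ℝ)) atTop (nhds 0))
    (hRL : Tendsto (fun m => ((R m : ℝ) * (L m : ℝ)) / (B m : ℝ)) atTop (nhds x)) :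
    Tendsto (fun m => ((B m : ℝ) / (L m : ℝ)) *
        (((B m - R m - 1).choose (L m - 2) : ℝ) / ((B m - 1).choose (L m - 1) : ℝ)))
      atTop (nhds (Real.exp (-x))) := by
  have hLR : Tendsto (fun m => (L m : ℝ)) atTop atTop :=
    tendsto_natCast_atTop_atTop.comp hLtop
  have h1L : Tendsto (fun m => ((L m : ℝ))⁻¹) atTop (nhds 0) := hLR.inv_tendsto_atTop
  have hBtop : Tendsto B atTop atTop := by
    have hev : ∀ᶠ m in atTop, L m ≤ B m := by
      filter_upwards [hLB.eventually (gt_mem_nhds (by norm_num : (0:ℝ) < 1))] with m hm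
      by_contra hc
      push_neg at hc
      have h1 : (1:ℝ) ≤ (L m : ℝ) / (B m : ℝ) := by
        rw [le_div_iff₀ (by exact_mod_cast hBpos m)]
        have : (B m : ℝ) ≤ (L m : ℝ) := by exact_mod_cast hc.le
        linarith
      linarith
    exact tendsto_atTop_mono' atTop hev hLtop
  have hBR : Tendsto (fun m => (B m : ℝ)) atTop atTop :=
    tendsto_natCast_atTop_atTop.comp hBtop
  have h1B : Tendsto (fun m => ((B m : ℝ))⁻¹) atTop (nhds 0) := hBR.inv_tendsto_atTop
  have hRB : Tendsto (fun m => (R m : ℝ) / (B m : ℝ)) atTop (nhds 0) := by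
    have h' : Tendsto (fun m => ((L m:ℝ))⁻¹ * ((R m : ℝ) * (L m:ℝ) / (B m:ℝ))) atTop
        (nhds ((0:ℝ) * x)) := h1L.mul hRL
    rw [zero_mul] at h'
    refine h'.congr fun m => ?_
    have hL0 : (L m : ℝ) ≠ 0 := by
      exact_mod_cast (hLpos m).ne'
    field_simp
  -- eventual bigness
  have hbig : ∀ᶠ m in atTop, R m + L m + 5 ≤ B m ∧ 4 ≤ L m := by
    have hsum : Tendsto (fun m => ((R m : ℝ) + L m) / (B m : ℝ)) atTop (nhds 0) := by
      have := hRB.add hLB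
      rw [add_zero] at this
      refine this.congr fun m => ?_
      rw [← add_div]
    filter_upwards [hsum.eventually (gt_mem_nhds (by norm_num : (0:ℝ) < 1/2)),
      hBR.eventually_ge_atTop 20, hLtop.eventually_ge_atTop 4] with m h1 h2 h3
    refine ⟨?_, h3⟩
    have hB0 : (0:ℝ) < (B m : ℝ) := by exact_mod_cast hBpos m
    have : ((R m : ℝ) + L m) < (B m : ℝ) / 2 := by
      rw [div_lt_iff₀ hB0] at h1; linarith
    have hRL2 : ((R m : ℝ) + L m + 5 : ℝ) ≤ (B m : ℝ) := by linarith
    exact_mod_cast hRL2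
  -- ratio-to-one limits
  have hd1 : Tendsto (fun m => (B m : ℝ) / ((B m : ℝ) - 1)) atTop (nhds 1) := by
    refine tendsto_div_shift B hBpos (fun _ => 1) ?_
    simpa [one_div] using h1B
  have hd2 : Tendsto (fun m => (B m : ℝ) / ((B m : ℝ) - 2)) atTop (nhds 1) := by
    refine tendsto_div_shift B hBpos (fun _ => 2) ?_
    have := h1B.const_mul (2:ℝ)
    simpa [div_eq_mul_inv, mul_comm] using this
  have hdL : Tendsto (fun m => (B m : ℝ) / ((B m : ℝ) - (L m : ℝ) + 1)) atTop (nhds 1) := by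
    have h := tendsto_div_shift B hBpos (fun m => (L m : ℝ) - 1) ?_
    · refine h.congr fun m => ?_
      ring_nf
    · have h2 := hLB.sub h1B
      rw [sub_zero] at h2
      refine h2.congr fun m => ?_
      rw [sub_div, one_div]
  -- the a-sequences
  set aU : ℕ → ℝ := fun m => ((R m : ℝ) - 1) / ((B m : ℝ) - 2) with haUdef
  set aL : ℕ → ℝ := fun m => ((R m : ℝ) - 1) / ((B m : ℝ) - (L m : ℝ) + 1) with haLdef
  have hcast : ∀ᶠ m in atTop, ((10:ℝ) ≤ (B m : ℝ)) ∧ ((4:ℝ) ≤ (L m : ℝ))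
      ∧ ((1:ℝ) ≤ (R m : ℝ)) ∧ ((R m : ℝ) + (L m : ℝ) + 5 ≤ (B m : ℝ)) := by
    filter_upwards [hbig] with m ⟨h1, h2⟩
    have hR1 : 1 ≤ R m := hRpos m
    have hB10 : 10 ≤ B m := by omega
    refine ⟨by exact_mod_cast hB10, by exact_mod_cast h2, by exact_mod_cast hR1, ?_⟩
    have : R m + L m + 5 ≤ B m := h1
    exact_mod_cast this
  have haU0 : Tendsto aU atTop (nhds 0) := by
    have h := (hRB.sub h1B).mul hd2
    rw [sub_zero, zero_mul] at h
    refine h.congr' ?_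
    filter_upwards [hcast] with m ⟨hB10, hL4, hR1, hsum⟩
    have hB0 : (B m : ℝ) ≠ 0 := by linarith
    have hB2 : (B m : ℝ) - 2 ≠ 0 := by linarith
    rw [haUdef]
    field_simp
  have haL0 : Tendsto aL atTop (nhds 0) := by
    have h := (hRB.sub h1B).mul hdL
    rw [sub_zero, zero_mul] at h
    refine h.congr' ?_
    filter_upwards [hcast] with m ⟨hB10, hL4, hR1, hsum⟩
    have hB0 : (B m : ℝ) ≠ 0 := by linarith
    have hBL : (B m : ℝ) - (L m : ℝ) + 1 ≠ 0 := by linarith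
    rw [haLdef]
    field_simp
  have core : Tendsto (fun m => ((L m : ℝ) - 2) * ((R m : ℝ) - 1) / (B m : ℝ))
      atTop (nhds x) := by
    have t2R : Tendsto (fun m => 2 * ((R m : ℝ) / (B m : ℝ))) atTop (nhds 0) := by
      simpa using hRB.const_mul (2:ℝ)
    have t2B : Tendsto (fun m => 2 * ((B m : ℝ))⁻¹) atTop (nhds 0) := by
      simpa using h1B.const_mul (2:ℝ)
    have h := ((hRL.sub hLB).sub t2R).add t2B
    rw [sub_zero, sub_zero, add_zero] at h
    refine h.congr fun m => ?_
    have hB0 : (B m : ℝ) ≠ 0 := by exact_mod_cast (hBpos m).ne'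
    field_simp
    ring
  have hkaU : Tendsto (fun m => ((L m - 2 : ℕ) : ℝ) * aU m) atTop (nhds x) := by
    have h := core.mul hd2
    rw [mul_one] at h
    refine h.congr' ?_
    filter_upwards [hbig, hcast] with m ⟨h1, h2⟩ ⟨hB10, hL4, hR1, hsum⟩
    have hB0 : (B m : ℝ) ≠ 0 := by linarith
    have hB2 : (B m : ℝ) - 2 ≠ 0 := by linarith
    have hc2 : ((L m - 2 : ℕ) : ℝ) = (L m : ℝ) - 2 := by
      have : 2 ≤ L m := by omega
      push_cast [this]
      ring
    rw [haUdef, hc2]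
    field_simp
  have hkaL : Tendsto (fun m => ((L m - 2 : ℕ) : ℝ) * aL m) atTop (nhds x) := by
    have h := core.mul hdL
    rw [mul_one] at h
    refine h.congr' ?_
    filter_upwards [hbig, hcast] with m ⟨h1, h2⟩ ⟨hB10, hL4, hR1, hsum⟩
    have hB0 : (B m : ℝ) ≠ 0 := by linarith
    have hBL : (B m : ℝ) - (L m : ℝ) + 1 ≠ 0 := by linarith
    have hc2 : ((L m - 2 : ℕ) : ℝ) = (L m : ℝ) - 2 := by
      have : 2 ≤ L m := by omega
      push_cast [this]
      ring
    rw [haLdef, hc2]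
    field_simp
  -- the central ratio Q
  set Q : ℕ → ℝ := fun m =>
    ((B m - R m - 1).choose (L m - 2) : ℝ) / ((B m - 2).choose (L m - 2) : ℝ) with hQdef
  have haUbnd : ∀ᶠ m in atTop, 0 ≤ aU m ∧ aU m < 1 := by
    filter_upwards [hcast] with m ⟨hB10, hL4, hR1, hsum⟩
    refine ⟨div_nonneg (by linarith) (by linarith), ?_⟩
    rw [div_lt_one (by linarith)]
    linarith
  have haLbnd : ∀ᶠ m in atTop, 0 ≤ aL m ∧ aL m < 1 := by
    filter_upwards [hcast] with m ⟨hB10, hL4, hR1, hsum⟩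
    refine ⟨div_nonneg (by linarith) (by linarith), ?_⟩
    rw [div_lt_one (by linarith)]
    linarith
  have hg := tendsto_one_sub_pow_exp x aU (fun m => L m - 2) haUbnd haU0 hkaU
  have hf := tendsto_one_sub_pow_exp x aL (fun m => L m - 2) haLbnd haL0 hkaL
  have hup : ∀ᶠ m in atTop, Q m ≤ (1 - aU m) ^ (L m - 2) := by
    filter_upwards [hbig, hcast] with m ⟨h1, h2⟩ ⟨hB10, hL4, hR1, hsum⟩
    have hRp := hRpos m
    have hLp := hLpos m
    have hBp := hBpos m
    have hk : L m - 2 ≤ B m - R m - 1 := by omega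
    have hnN : B m - R m - 1 ≤ B m - 2 := by omega
    have hub := ratio_upper (L m - 2) (B m - R m - 1) (B m - 2) hk hnN
    have e_n : ((B m - R m - 1 : ℕ) : ℝ) = (B m : ℝ) - (R m : ℝ) - 1 := by
      rw [Nat.cast_sub (by omega : 1 ≤ B m - R m), Nat.cast_sub (by omega : R m ≤ B m)]
      norm_num
    have e_N : ((B m - 2 : ℕ) : ℝ) = (B m : ℝ) - 2 := by
      rw [Nat.cast_sub (by omega : 2 ≤ B m)]
      norm_num
    have hCN : (0:ℝ) < ((B m - 2).choose (L m - 2) : ℝ) := by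
      exact_mod_cast Nat.choose_pos (by omega : L m - 2 ≤ B m - 2)
    have hN0 : (0:ℝ) < ((B m - 2 : ℕ) : ℝ) := by rw [e_N]; linarith
    have hQle : Q m ≤ (((B m - R m - 1 : ℕ) : ℝ) / ((B m - 2 : ℕ) : ℝ)) ^ (L m - 2) := by
      rw [hQdef, div_pow, div_le_div_iff₀ hCN (pow_pos hN0 _)]
      linarith [hub]
    have hbase : (((B m - R m - 1 : ℕ) : ℝ) / ((B m - 2 : ℕ) : ℝ)) = 1 - aU m := by
      rw [e_n, e_N, haUdef]
      have hB2 : (B m : ℝ) - 2 ≠ 0 := by linarith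
      field_simp
      ring
    rwa [hbase] at hQle
  have hlow : ∀ᶠ m in atTop, (1 - aL m) ^ (L m - 2) ≤ Q m := by
    filter_upwards [hbig, hcast] with m ⟨h1, h2⟩ ⟨hB10, hL4, hR1, hsum⟩
    have hRp := hRpos m
    have hLp := hLpos m
    have hBp := hBpos m
    have hk : L m - 2 ≤ B m - R m - 1 := by omega
    have hnN : B m - R m - 1 ≤ B m - 2 := by omega
    have hlb := ratio_lower (L m - 2) (B m - R m - 1) (B m - 2) hk hnN
    have e_n : ((B m - R m - 1 : ℕ) : ℝ) = (B m : ℝ) - (R m : ℝ) - 1 := by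
      rw [Nat.cast_sub (by omega : 1 ≤ B m - R m), Nat.cast_sub (by omega : R m ≤ B m)]
      norm_num
    have e_N : ((B m - 2 : ℕ) : ℝ) = (B m : ℝ) - 2 := by
      rw [Nat.cast_sub (by omega : 2 ≤ B m)]
      norm_num
    have e_k : ((L m - 2 : ℕ) : ℝ) = (L m : ℝ) - 2 := by
      rw [Nat.cast_sub (by omega : 2 ≤ L m)]
      norm_num
    have hCN : (0:ℝ) < ((B m - 2).choose (L m - 2) : ℝ) := by
      exact_mod_cast Nat.choose_pos (by omega : L m - 2 ≤ B m - 2)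
    have hNk1 : (0:ℝ) < ((B m - 2 : ℕ) : ℝ) - ((L m - 2 : ℕ) : ℝ) + 1 := by
      rw [e_N, e_k]; linarith
    have hQge : ((((B m - R m - 1 : ℕ) : ℝ) - ((L m - 2 : ℕ) : ℝ) + 1)
        / (((B m - 2 : ℕ) : ℝ) - ((L m - 2 : ℕ) : ℝ) + 1)) ^ (L m - 2) ≤ Q m := by
      rw [hQdef, div_pow, div_le_div_iff₀ (pow_pos hNk1 _) hCN]
      linarith [hlb]
    have hbase : ((((B m - R m - 1 : ℕ) : ℝ) - ((L m - 2 : ℕ) : ℝ) + 1)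
        / (((B m - 2 : ℕ) : ℝ) - ((L m - 2 : ℕ) : ℝ) + 1)) = 1 - aL m := by
      rw [e_n, e_N, e_k, haLdef]
      have hBL : (B m : ℝ) - (L m : ℝ) + 1 ≠ 0 := by linarith
      have hBL2 : (B m : ℝ) - 2 - ((L m : ℝ) - 2) + 1 ≠ 0 := by
        intro hc; apply hBL; linarith
      field_simp
      ring
    rwa [hbase] at hQge
  have hQ : Tendsto Q atTop (nhds (Real.exp (-x))) :=
    tendsto_of_tendsto_of_tendsto_of_le_of_le' hf hg hlow hup
  -- the prefactor tends to one
  have hc : Tendsto (fun m => ((B m : ℝ) / (L m : ℝ)) * (((L m : ℝ) - 1) / ((B m : ℝ) - 1)))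
      atTop (nhds 1) := by
    have hLfrac : Tendsto (fun m => 1 - ((L m : ℝ))⁻¹) atTop (nhds 1) := by
      have h0 : Tendsto (fun _ : ℕ => (1:ℝ)) atTop (nhds 1) := tendsto_const_nhds
      have := h0.sub h1L
      simpa using this
    have h := hLfrac.mul hd1
    rw [mul_one] at h
    refine h.congr fun m => ?_
    have hL0 : (L m : ℝ) ≠ 0 := by exact_mod_cast (hLpos m).ne'
    have e1 : 1 - ((L m : ℝ))⁻¹ = ((L m : ℝ) - 1) / (L m : ℝ) := by
      field_simp
    rw [e1]
    ring
  have hfinal := hc.mul hQ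
  rw [one_mul] at hfinal
  refine hfinal.congr' ?_
  filter_upwards [hbig, hcast] with m ⟨h1, h2⟩ ⟨hB10, hL4, hR1, hsum⟩
  -- the key combinatorial identity
  have hid : (B m - 1) * (B m - 2).choose (L m - 2) = (B m - 1).choose (L m - 1) * (L m - 1) := by
    have h := Nat.add_one_mul_choose_eq (B m - 2) (L m - 2)
    rw [show B m - 2 + 1 = B m - 1 from by omega,
      show L m - 2 + 1 = L m - 1 from by omega] at h
    exact h
  have hidR : ((B m : ℝ) - 1) * ((B m - 2).choose (L m - 2) : ℝ)
      = ((B m - 1).choose (L m - 1) : ℝ) * ((L m : ℝ) - 1) := by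
    have := congrArg (Nat.cast : ℕ → ℝ) hid
    push_cast [Nat.cast_sub (by omega : 1 ≤ B m), Nat.cast_sub (by omega : 1 ≤ L m)] at this
    convert this using 2
  have hCB2 : (0:ℝ) < ((B m - 2).choose (L m - 2) : ℝ) := by
    exact_mod_cast Nat.choose_pos (by omega : L m - 2 ≤ B m - 2)
  have hCB1 : (0:ℝ) < ((B m - 1).choose (L m - 1) : ℝ) := by
    exact_mod_cast Nat.choose_pos (by omega : L m - 1 ≤ B m - 1)
  have hL0 : (L m : ℝ) ≠ 0 := by linarith
  have hL1 : (L m : ℝ) - 1 ≠ 0 := by linarith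
  have hB1 : (B m : ℝ) - 1 ≠ 0 := by linarith
  have hq : ((L m : ℝ) - 1) / ((B m : ℝ) - 1) * Q m
      = ((B m - R m - 1).choose (L m - 2) : ℝ) / ((B m - 1).choose (L m - 1) : ℝ) := by
    rw [hQdef]
    rw [div_mul_div_comm, div_eq_div_iff (mul_ne_zero hB1 hCB2.ne') hCB1.ne']
    linear_combination (-((B m - R m - 1).choose (L m - 2) : ℝ)) * hidR
  rw [mul_assoc, hq]
end
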